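/- Let G be a connected graph (finite or infinite, locally finite) that is κ-regular for an uncountable cardinal κ satisfying κ = ℵ_κ. Then G admits an edge-colouring with two colours such that the only automorphism of G preserving the colouring is the identity; that is, D'(G) ≤ 2. -/

import Mathlib

open Cardinal

universe u

namespace DistAux


variable {V : Type u} {K : Type u}

/-- Encode a walk as the list of "local names" of its darts. -/
noncomputable def encW (G : SimpleGraph V) (F : V → Sym2 V → K) {a b : V} (p : G.Walk a b) :
    List K :=
  p.darts.map (fun d => F d.fst d.edge)

theorem encW_inj (G : SimpleGraph V) (F : V → Sym2 V → K)
    (hF : ∀ v, ∀ e₁ ∈ G.incidenceSet v, ∀ e₂ ∈ G.incidenceSet v, F v e₁ = F v e₂ → e₁ = e₂) :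
    ∀ {a b b' : V} (p : G.Walk a b) (q : G.Walk a b'),
      encW G F p = encW G F q → b = b' := by
  intro a b b' p
  induction p with
  | nil =>
    intro q h
    cases q with
    | nil => rfl
    | cons h' q' => simp [encW] at h
  | @cons a c b hadj p ih =>
    intro q h
    cases q with
    | nil => simp [encW] at h
    | @cons _ c' _ hadj' q' =>
      simp only [encW, SimpleGraph.Walk.darts_cons, List.map_cons, List.cons.injEq] at h
      obtain ⟨h1, h2⟩ := h
      have he1 : s(a, c) ∈ G.incidenceSet a := (G.mem_incidenceSet a c).mpr hadj
      have he2 : s(a, c') ∈ G.incidenceSet a := (G.mem_incidenceSet a c').mpr hadj'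
      have : s(a, c) = s(a, c') := hF a _ he1 _ he2 h1
      have hcc : c = c' := Sym2.congr_right.mp this
      subst hcc
      exact ih q' h2

theorem card_le_of_connected (G : SimpleGraph V) (κ : Cardinal.{u}) (hκ : ℵ₀ ≤ κ)
    (hconn : G.Connected) (hreg : ∀ v : V, #(G.incidenceSet v) = κ) : #V ≤ κ := by
  classical
  obtain ⟨v₀⟩ := hconn.nonempty
  set K := κ.out with hK
  have hKcard : #K = κ := Cardinal.mk_out κ
  have hKne : Nonempty K := by
    rw [← Cardinal.mk_ne_zero_iff, hKcard]
    exact (Cardinal.aleph0_pos.trans_le hκ).ne'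
  have eEquiv : ∀ v : V, Nonempty (↥(G.incidenceSet v) ≃ K) := by
    intro v
    rw [← Cardinal.eq, hreg v, hKcard]
  let F : V → Sym2 V → K := fun v e =>
    if h : e ∈ G.incidenceSet v then (eEquiv v).some ⟨e, h⟩ else Classical.arbitrary K
  have hF : ∀ v, ∀ e₁ ∈ G.incidenceSet v, ∀ e₂ ∈ G.incidenceSet v, F v e₁ = F v e₂ → e₁ = e₂ := by
    intro v e₁ h₁ e₂ h₂ h
    simp only [F, dif_pos h₁, dif_pos h₂] at h
    exact Subtype.ext_iff.mp ((eEquiv v).some.injective h)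
  have hwalk : ∀ v : V, G.Walk v₀ v := fun v => ((hconn.preconnected v₀ v).some)
  have hinj : Function.Injective (fun v => encW G F (hwalk v)) := by
    intro u w h
    exact encW_inj G F hF (hwalk u) (hwalk w) h
  calc #V ≤ #(List K) := Cardinal.mk_le_of_injective hinj
    _ ≤ max ℵ₀ #K := Cardinal.mk_list_le_max K
    _ ≤ κ := by rw [hKcard]; exact max_le hκ le_rfl

end DistAux

/-- Every connected graph that is `κ`-regular (every vertex has exactly `κ` incident
edges) for an uncountable cardinal `κ` with `ℵ_κ = κ` admits a distinguishing
edge-colouring with two colours, i.e. `D'(G) ≤ 2`. -/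
theorem distinguishing_index_le_two_of_aleph_fixed_point {V : Type u} (G : SimpleGraph V)
    (κ : Cardinal.{u}) (huncount : ℵ₀ < κ) (hfix : Cardinal.aleph κ.ord = κ)
    (hconn : G.Connected) (hreg : ∀ v : V, #(G.incidenceSet v) = κ) :
    ∃ c : G.edgeSet → Fin 2,
      ∀ γ : G ≃g G, (∀ e : G.edgeSet, c (γ.mapEdgeSet e) = c e) → ∀ v : V, γ v = v := by
  have hVcard : #V ≤ κ := DistAux.card_le_of_connected G κ huncount.le hconn hreg
  classical
  haveI : IsWellOrder κ.ord.ToType (· < ·) := isWellOrder_lt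
  have hκ : ℵ₀ ≤ κ := huncount.le
  -- an injection of V into the canonical well-order of type κ.ord
  have hW : #κ.ord.ToType = κ := by rw [Cardinal.mk_toType, Cardinal.card_ord]
  obtain ⟨f⟩ : Nonempty (V ↪ κ.ord.ToType) := by rw [← Cardinal.le_def, hW]; exact hVcard
  -- ranks
  let rk : V → Ordinal.{u} := fun v => Ordinal.typein (α := κ.ord.ToType) (· < ·) (f v)
  have hrk_lt : ∀ v, rk v < κ.ord := by
    intro v
    have := Ordinal.typein_lt_type (α := κ.ord.ToType) (· < ·) (f v)
    rwa [Ordinal.type_toType] at this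
  have hrk_inj : Function.Injective rk := fun u v h =>
    f.injective (Ordinal.typein_injective (α := κ.ord.ToType) (· < ·) h)
  -- target cardinals
  let μ : V → Cardinal.{u} := fun v => Cardinal.aleph (rk v + 1)
  have hμ_inf : ∀ v, ℵ₀ ≤ μ v := fun v => Cardinal.aleph0_le_aleph _
  have hμ_lt : ∀ v, μ v < κ := by
    intro v
    rw [← hfix]
    refine Cardinal.aleph_lt_aleph.mpr ?_
    rw [Ordinal.add_one_eq_succ]
    exact (Cardinal.isSuccLimit_ord hκ).succ_lt (hrk_lt v)
  have hμ_mono : ∀ {a b : V}, rk a < rk b → μ a < μ b := by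
    intro a b h
    refine Cardinal.aleph_lt_aleph.mpr ?_
    rw [Ordinal.add_one_eq_succ, Ordinal.add_one_eq_succ]
    exact Order.succ_lt_succ h
  have hμ_inj : ∀ {a b : V}, μ a = μ b → a = b := by
    intro a b h
    rcases lt_trichotomy (rk a) (rk b) with hlt | heq | hgt
    · exact absurd h (hμ_mono hlt).ne
    · exact hrk_inj heq
    · exact absurd h.symm (hμ_mono hgt).ne
  -- initial segments are small
  have h_seg : ∀ v, #{w : κ.ord.ToType // w < f v} < μ v := by
    intro v
    have h1 : #{w : κ.ord.ToType // w < f v} = (rk v).card := Ordinal.card_typein (f v)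
    rw [h1]
    calc (rk v).card ≤ (Cardinal.aleph (rk v)).ord.card := by
          refine Ordinal.card_le_card ?_
          rw [Cardinal.ord_aleph]
          exact Ordinal.le_omega_self _
      _ = Cardinal.aleph (rk v) := Cardinal.card_ord _
      _ < μ v := by
          refine Cardinal.aleph_lt_aleph.mpr ?_
          rw [Ordinal.add_one_eq_succ]
          exact Order.lt_succ _
  -- incidence sets as sets of abstract edges
  let E := G.edgeSet
  let Inc : V → Set E := fun v => {e | v ∈ (e : Sym2 V)}
  have hInc : ∀ v, #(Inc v) = κ := by
    intro v
    rw [← hreg v]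
    exact Cardinal.mk_congr (Equiv.subtypeSubtypeEquivSubtypeInter
      (fun e => e ∈ G.edgeSet) (fun e => v ∈ e))
  -- the "other endpoint" of an incident edge
  have hother_ne : ∀ (v : V) (e : E) (h : v ∈ (e : Sym2 V)), Sym2.Mem.other h ≠ v :=
    fun v e h => Sym2.other_ne (G.not_isDiag_of_mem_edgeSet e.2) h
  have hother_mem : ∀ (v : V) (e : E) (h : v ∈ (e : Sym2 V)), Sym2.Mem.other h ∈ (e : Sym2 V) :=
    fun v e h => Sym2.other_mem h
  have heq_other : ∀ (v : V) (e : E) (h : v ∈ (e : Sym2 V)) (u : V),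
      u ∈ (e : Sym2 V) → u ≠ v → u = Sym2.Mem.other h := by
    intro v e h u hu hne
    have hspec := Sym2.other_spec h
    rw [← hspec] at hu
    rcases Sym2.mem_iff.mp hu with h1 | h2
    · exact absurd h1 hne
    · exact h2
  -- edges incident to v going to an earlier vertex
  let Earlier : V → Set E := fun v => {e | ∃ h : v ∈ (e : Sym2 V), f (Sym2.Mem.other h) < f v}
  have hEarlier_sub : ∀ v, Earlier v ⊆ Inc v := fun v e he => he.1
  have hEarlier_card : ∀ v, #(Earlier v) < μ v := by
    intro v
    refine lt_of_le_of_lt ?_ (h_seg v)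
    have hinj : Function.Injective
        (fun (e : Earlier v) => (⟨f (Sym2.Mem.other e.2.choose), e.2.choose_spec⟩ :
          {w : κ.ord.ToType // w < f v})) := by
      intro e₁ e₂ h
      have h' : f (Sym2.Mem.other e₁.2.choose) = f (Sym2.Mem.other e₂.2.choose) :=
        congrArg Subtype.val h
      have ho : Sym2.Mem.other e₁.2.choose = Sym2.Mem.other e₂.2.choose := f.injective h'
      have h1 := Sym2.other_spec e₁.2.choose
      have h2 := Sym2.other_spec e₂.2.choose
      have : ((e₁ : E) : Sym2 V) = ((e₂ : E) : Sym2 V) := by rw [← h1, ← h2, ho]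
      exact Subtype.ext (Subtype.ext this)
    exact Cardinal.mk_le_of_injective hinj
  -- edges incident to v going to a later vertex
  let Later : V → Set E := fun v => Inc v \ Earlier v
  have hLater_card : ∀ v, #(Later v) = κ := by
    intro v
    have hsum := Cardinal.mk_diff_add_mk (hEarlier_sub v)
    rw [hInc v] at hsum
    by_contra hne
    have hle : #(Later v) ≤ κ := by
      rw [← hInc v]; exact Cardinal.mk_le_mk_of_subset Set.diff_subset
    have hlt : #(Later v) < κ := lt_of_le_of_ne hle hne
    have := Cardinal.add_lt_of_lt hκ hlt ((hEarlier_card v).trans (hμ_lt v))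
    rw [hsum] at this
    exact lt_irrefl _ this
  -- choose the red edges at each vertex
  have hchoice : ∀ v, ∃ R : Set E, R ⊆ Later v ∧ #R = μ v := by
    intro v
    have hle : μ v ≤ #(Later v) := by rw [hLater_card v]; exact (hμ_lt v).le
    obtain ⟨p, hp⟩ := Cardinal.le_mk_iff_exists_set.mp hle
    refine ⟨Subtype.val '' p, ?_, ?_⟩
    · rintro e ⟨⟨e', he'⟩, _, rfl⟩; exact he'
    · rw [Cardinal.mk_image_eq Subtype.val_injective]; exact hp
  choose Rv hRsub hRcard using hchoice
  let Red : Set E := ⋃ v, Rv v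
  -- key structural identity
  have hkey : ∀ v, Inc v ∩ Red = Rv v ∪ (Earlier v ∩ Red) := by
    intro v
    ext e
    constructor
    · rintro ⟨hv, hred⟩
      by_cases hE : e ∈ Earlier v
      · exact Or.inr ⟨hE, hred⟩
      · left
        obtain ⟨u, hu⟩ := Set.mem_iUnion.mp hred
        have hLu : e ∈ Later u := hRsub u hu
        have huv : u = v := by
          by_contra hne
          have huin : u ∈ (e : Sym2 V) := hLu.1
          have hvin : v ∈ (e : Sym2 V) := hv
          -- v is the other endpoint of e from u
          have hvo : v = Sym2.Mem.other huin := heq_other u e huin v hvin (Ne.symm hne)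
          have huo : u = Sym2.Mem.other hvin := heq_other v e hvin u huin hne
          -- e ∉ Earlier u : ¬ f v < f u
          have h1 : ¬ f (Sym2.Mem.other huin) < f u := by
            intro hcon
            exact hLu.2 ⟨huin, hcon⟩
          have h2 : ¬ f (Sym2.Mem.other hvin) < f v := by
            intro hcon
            exact hE ⟨hvin, hcon⟩
          rw [← hvo] at h1
          rw [← huo] at h2
          have : f u = f v := le_antisymm (not_lt.mp h1) (not_lt.mp h2)
          exact hne (f.injective this)
        rwa [huv] at hu
    · rintro (h | h)
      · exact ⟨(hRsub v h).1, Set.mem_iUnion.mpr ⟨v, h⟩⟩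
      · exact ⟨(hEarlier_sub v h.1), h.2⟩
  -- red degree is exactly μ v
  have hcard : ∀ v, #(Inc v ∩ Red : Set E) = μ v := by
    intro v
    refine le_antisymm ?_ ?_
    · rw [hkey v]
      have h1 : #(Earlier v ∩ Red : Set E) ≤ μ v :=
        ((Cardinal.mk_le_mk_of_subset Set.inter_subset_left).trans (hEarlier_card v).le)
      calc #(Rv v ∪ (Earlier v ∩ Red) : Set E) ≤ #(Rv v) + #(Earlier v ∩ Red : Set E) :=
            Cardinal.mk_union_le _ _
        _ ≤ μ v + μ v := by rw [hRcard v]; exact add_le_add_right h1 _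
        _ = μ v := Cardinal.add_eq_left (hμ_inf v) le_rfl
    · rw [← hRcard v]
      refine Cardinal.mk_le_mk_of_subset ?_
      rw [hkey v]
      exact Set.subset_union_left
  -- the colouring
  refine ⟨fun e => if e ∈ Red then 0 else 1, ?_⟩
  intro γ hγ v
  -- colour-preservation means Red-preservation
  have hred_iff : ∀ e : E, γ.mapEdgeSet e ∈ Red ↔ e ∈ Red := by
    intro e
    have h : (if γ.mapEdgeSet e ∈ Red then (0 : Fin 2) else 1)
        = (if e ∈ Red then (0 : Fin 2) else 1) := hγ e
    constructor
    · intro h2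
      by_contra h1
      rw [if_pos h2, if_neg h1] at h
      exact absurd h (by decide)
    · intro h1
      by_contra h2
      rw [if_neg h2, if_pos h1] at h
      exact absurd h (by decide)
  -- the red sets at v and γ v are equinumerous
  have hmem_iff : ∀ (u : V) (e : E), γ.mapEdgeSet e ∈ Inc (γ u) ↔ e ∈ Inc u := by
    intro u e
    show γ u ∈ Sym2.map γ (e : Sym2 V) ↔ u ∈ (e : Sym2 V)
    rw [Sym2.mem_map]
    constructor
    · rintro ⟨a, ha, hb⟩
      have : a = u := γ.toEquiv.injective hb
      rwa [← this]
    · intro h; exact ⟨u, h, rfl⟩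
  have hequiv : #(Inc v ∩ Red : Set E) = #(Inc (γ v) ∩ Red : Set E) := by
    refine Cardinal.mk_congr (Equiv.subtypeEquiv γ.mapEdgeSet ?_)
    intro e
    constructor
    · rintro ⟨h1, h2⟩
      exact ⟨(hmem_iff v e).mpr h1, (hred_iff e).mpr h2⟩
    · rintro ⟨h1, h2⟩
      exact ⟨(hmem_iff v e).mp h1, (hred_iff e).mp h2⟩
  have : μ (γ v) = μ v := by rw [← hcard, ← hcard, hequiv]
  exact hμ_inj this
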